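/- The free sum Q of three equilateral triangles is a 2-neighborly polytope: for any two distinct points p, q among the nine points w(k,j), the segment from p to q is a face of Q, i.e. IsExtreme ℝ Q (segment ℝ p q). -/

import Mathlib

open Finset

/-- A supporting-hyperplane criterion: if a continuous linear functional `f` is at most `c` on a
set `S`, equals `c` at `p, q ∈ S`, and equals `c` at no other point of `S`, then the segment
`[p, q]` is a face of `convexHull ℝ S`. -/
lemma face_lemma {E : Type*} [NormedAddCommGroup E] [InnerProductSpace ℝ E]
    (S : Set E) (f : E →L[ℝ] ℝ) (c : ℝ) (p q : E)
    (hp : p ∈ S) (hq : q ∈ S) (hfp : f p = c) (hfq : f q = c)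
    (hle : ∀ s ∈ S, f s ≤ c)
    (heq : ∀ s ∈ S, f s = c → s = p ∨ s = q) :
    IsExtreme ℝ (convexHull ℝ S) (segment ℝ p q) := by
  have hQle : ∀ y ∈ convexHull ℝ S, f y ≤ c := fun y hy =>
    convexHull_min (t := {x | f x ≤ c}) hle
      (convex_halfSpace_le ⟨map_add f, map_smul f⟩ c) hy
  have key : segment ℝ p q = f.toExposed (convexHull ℝ S) := by
    ext x
    constructor
    · rintro hx
      have hxQ : x ∈ convexHull ℝ S := by
        rw [← convexHull_pair] at hx
        exact convexHull_mono (by simp [Set.insert_subset_iff, hp, hq]) hx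
      obtain ⟨a, b, ha, hb, hab, rfl⟩ := hx
      refine ⟨hxQ, fun y hy => ?_⟩
      have : f (a • p + b • q) = c := by
        simp only [map_add, map_smul, smul_eq_mul, hfp, hfq]
        rw [← add_mul, hab, one_mul]
      rw [this]
      exact hQle y hy
    · rintro ⟨hxQ, hmax⟩
      have hfx : f x = c :=
        le_antisymm (hQle x hxQ) (hfp ▸ hmax p (subset_convexHull ℝ S hp))
      rw [mem_convexHull_iff_exists_fintype] at hxQ
      obtain ⟨ι, hι, μ, z, hμ0, hμ1, hzS, hxsum⟩ := hxQ
      have hsum : ∑ i, μ i * f (z i) = c := by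
        rw [← hfx, ← hxsum, map_sum]
        simp [smul_eq_mul]
      have h0 : ∀ i : ι, μ i * (c - f (z i)) = 0 := by
        have hnn : ∀ i ∈ Finset.univ (α := ι), 0 ≤ μ i * (c - f (z i)) := fun i _ =>
          mul_nonneg (hμ0 i) (sub_nonneg.2 (hle _ (hzS i)))
        have hsum0 : ∑ i, μ i * (c - f (z i)) = 0 := by
          have : ∑ i, μ i * (c - f (z i)) = (∑ i, μ i) * c - ∑ i, μ i * f (z i) := by
            rw [Finset.sum_mul, ← Finset.sum_sub_distrib]
            exact Finset.sum_congr rfl fun i _ => by ring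
          rw [this, hμ1, hsum, one_mul, sub_self]
        exact fun i => (Finset.sum_eq_zero_iff_of_nonneg hnn).1 hsum0 i (Finset.mem_univ i)
      have hxpq : x ∈ convexHull ℝ ({p, q} : Set E) := by
        refine mem_convexHull_of_exists_fintype μ (fun i => if μ i = 0 then p else z i)
          hμ0 hμ1 (fun i => ?_) ?_
        · by_cases h : μ i = 0
          · simp [h]
          · have hfz : f (z i) = c := by
              have := h0 i
              rcases mul_eq_zero.1 this with h' | h'
              · exact absurd h' h
              · linarith [sub_eq_zero.1 h']
            simp only [h, if_neg]
            rcases heq _ (hzS i) hfz with h' | h' <;> simp [h']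
        · rw [← hxsum]
          refine Finset.sum_congr rfl fun i _ => ?_
          by_cases h : μ i = 0 <;> simp [h]
      rwa [convexHull_pair] at hxpq
  rw [key]
  exact (ContinuousLinearMap.toExposed.isExposed).isExtreme

/-- The vector supported in the `m`-th coordinate plane with value `u` there. -/
noncomputable def Wv (u : ℝ × ℝ) (m : Fin 3) : EuclideanSpace ℝ (Fin 6) :=
  WithLp.toLp 2 fun i => if (i : ℕ) = 2 * (m : ℕ) then u.1
    else if (i : ℕ) = 2 * (m : ℕ) + 1 then u.2 else 0

lemma inner_Wv (t : Fin 3 → ℝ × ℝ) (w : Fin 3 → Fin 3 → EuclideanSpace ℝ (Fin 6))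
    (hw : ∀ k j i, w k j i =
      if (i : ℕ) = 2 * (k : ℕ) then (t j).1
      else if (i : ℕ) = 2 * (k : ℕ) + 1 then (t j).2 else 0)
    (u : ℝ × ℝ) (m a b : Fin 3) :
    (inner ℝ (Wv u m) (w a b) : ℝ) =
      if a = m then u.1 * (t b).1 + u.2 * (t b).2 else 0 := by
  rw [PiLp.inner_apply]
  simp only [RCLike.inner_apply, conj_trivial, Fin.sum_univ_six, hw, Wv, PiLp.toLp_apply]
  fin_cases m <;> fin_cases a <;>
    norm_num [show ((0:Fin 6):ℕ)=0 from rfl, show ((1:Fin 6):ℕ)=1 from rfl,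
      show ((2:Fin 6):ℕ)=2 from rfl, show ((3:Fin 6):ℕ)=3 from rfl,
      show ((4:Fin 6):ℕ)=4 from rfl, show ((5:Fin 6):ℕ)=5 from rfl, Fin.ext_iff]
  all_goals ring

lemma tdot_aux (t : Fin 3 → ℝ × ℝ)
    (ht : t = ![(1, 0), (-1/2, Real.sqrt 3 / 2), (-1/2, -(Real.sqrt 3 / 2))])
    (a b : Fin 3) :
    (t a).1 * (t b).1 + (t a).2 * (t b).2 = if a = b then 1 else -(1/2) := by
  have h3 : Real.sqrt 3 * Real.sqrt 3 = 3 := Real.mul_self_sqrt (by norm_num)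
  subst ht
  fin_cases a <;> fin_cases b <;> simp [Fin.ext_iff] <;> nlinarith [h3]

/-- The free sum `Q` of three equilateral triangles (the Delone polytope of `E6*`) is
2-neighborly: any two distinct vertices among the nine points `w k j` are joined by an
edge, i.e. the segment between them is a face of `Q`. -/
theorem stmt_10
    (t : Fin 3 → ℝ × ℝ)
    (ht : t = ![(1, 0), (-1/2, Real.sqrt 3 / 2), (-1/2, -(Real.sqrt 3 / 2))])
    (w : Fin 3 → Fin 3 → EuclideanSpace ℝ (Fin 6))
    (hw : ∀ k j i, w k j i =
      if (i : ℕ) = 2 * (k : ℕ) then (t j).1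
      else if (i : ℕ) = 2 * (k : ℕ) + 1 then (t j).2 else 0)
    (Q : Set (EuclideanSpace ℝ (Fin 6)))
    (hQ : Q = convexHull ℝ {p | ∃ k j, p = w k j}) :
    ∀ p q : EuclideanSpace ℝ (Fin 6),
      (∃ k j, p = w k j) → (∃ k j, q = w k j) → p ≠ q →
      IsExtreme ℝ Q (segment ℝ p q) := by
  subst hQ
  rintro p q ⟨k, j, rfl⟩ ⟨k', j', rfl⟩ hpq
  have memS : ∀ a b : Fin 3, w a b ∈ {p | ∃ k j, p = w k j} := fun a b => ⟨a, b, rfl⟩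
  have tdot := tdot_aux t ht
  have hW := inner_Wv t w hw
  by_cases hk : k = k'
  · -- same triangle
    subst hk
    have hj : j ≠ j' := fun h => hpq (by rw [h])
    have val : ∀ a b : Fin 3,
        (innerSL ℝ (Wv ((t j).1 + (t j').1, (t j).2 + (t j').2) k)) (w a b) =
          if a = k then ((if j = b then (1:ℝ) else -(1/2)) + (if j' = b then 1 else -(1/2)))
          else 0 := by
      intro a b
      rw [innerSL_apply_apply, hW]
      by_cases h : a = k
      · rw [if_pos h, if_pos h]
        have : ((t j).1 + (t j').1) * (t b).1 + ((t j).2 + (t j').2) * (t b).2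
            = ((t j).1 * (t b).1 + (t j).2 * (t b).2)
              + ((t j').1 * (t b).1 + (t j').2 * (t b).2) := by ring
        rw [this, tdot, tdot]
      · rw [if_neg h, if_neg h]
    refine face_lemma _ (innerSL ℝ (Wv ((t j).1 + (t j').1, (t j).2 + (t j').2) k)) (1/2)
      _ _ (memS k j) (memS k j') ?_ ?_ ?_ ?_
    · rw [val]; simp [Ne.symm hj]; norm_num
    · rw [val]; simp [hj]; norm_num
    · rintro s ⟨a, b, rfl⟩
      rw [val]
      by_cases h : a = k
      · rw [if_pos h]
        split_ifs with h1 h2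
        · exact absurd (h1.trans h2.symm) hj
        · norm_num
        · norm_num
        · norm_num
      · rw [if_neg h]; norm_num
    · rintro s ⟨a, b, rfl⟩ hs
      rw [val] at hs
      by_cases h : a = k
      · rw [if_pos h] at hs
        subst h
        split_ifs at hs with h1 h2 h3
        · norm_num at hs
        · left; rw [← h1]
        · right; rw [← h3]
        · norm_num at hs
      · rw [if_neg h] at hs; norm_num at hs
  · -- different triangles
    have val : ∀ a b : Fin 3,
        (innerSL ℝ (Wv (t j) k + Wv (t j') k')) (w a b) =
          (if a = k then (if j = b then (1:ℝ) else -(1/2)) else 0) +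
          (if a = k' then (if j' = b then (1:ℝ) else -(1/2)) else 0) := by
      intro a b
      rw [innerSL_apply_apply, inner_add_left, hW, hW]
      congr 1
      · by_cases h : a = k
        · rw [if_pos h, if_pos h, tdot]
        · rw [if_neg h, if_neg h]
      · by_cases h : a = k'
        · rw [if_pos h, if_pos h, tdot]
        · rw [if_neg h, if_neg h]
    refine face_lemma _ (innerSL ℝ (Wv (t j) k + Wv (t j') k')) 1
      _ _ (memS k j) (memS k' j') ?_ ?_ ?_ ?_
    · rw [val]; simp [hk]
    · rw [val, if_neg (fun h : k' = k => hk h.symm), if_pos rfl, if_pos rfl, zero_add]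
    · rintro s ⟨a, b, rfl⟩
      rw [val]
      by_cases h1 : a = k <;> by_cases h2 : a = k'
      · exact absurd (h1 ▸ h2) hk
      · rw [if_pos h1, if_neg h2, add_zero]; split_ifs <;> norm_num
      · rw [if_neg h1, if_pos h2, zero_add]; split_ifs <;> norm_num
      · rw [if_neg h1, if_neg h2]; norm_num
    · rintro s ⟨a, b, rfl⟩ hs
      rw [val] at hs
      by_cases h1 : a = k <;> by_cases h2 : a = k'
      · exact absurd (h1 ▸ h2) hk
      · rw [if_pos h1, if_neg h2, add_zero] at hs
        split_ifs at hs with h3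
        · left; subst h1; rw [← h3]
        · norm_num at hs
      · rw [if_neg h1, if_pos h2, zero_add] at hs
        split_ifs at hs with h3
        · right; subst h2; rw [← h3]
        · norm_num at hs
      · rw [if_neg h1, if_neg h2] at hs; norm_num at hs
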